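/- Let f ∈ ℂ[z] with nonzero constant term, no roots on the unit circle, and let ρ_n = −(1/(2πi)) ∮_{|z|=1+δ} z^{n−1}/f(z) dz where all roots of f outside the closed unit disk have modulus > 1+δ. Then there exists λ > 1 such that ρ_{−n} = o(λ^{−n}) as n → ∞, and if moreover all roots of f have modulus ≠ 1 then there exists 0 < δ' < 1 such that ρ_n = o(δ'^n) as n → ∞. -/

import Mathlib

open Polynomial Filter Asymptotics

private lemma sphere_min (f : Polynomial ℂ) (R : ℝ) (hR : 0 ≤ R)
    (h : ∀ z ∈ Metric.sphere (0 : ℂ) R, f.eval z ≠ 0) :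
    ∃ m : ℝ, 0 < m ∧ ∀ z ∈ Metric.sphere (0 : ℂ) R, m ≤ ‖f.eval z‖ := by
  have hcpt : IsCompact (Metric.sphere (0 : ℂ) R) := isCompact_sphere _ _
  have hne : (Metric.sphere (0 : ℂ) R).Nonempty := NormedSpace.sphere_nonempty.2 hR
  have hcont : ContinuousOn (fun z : ℂ => ‖f.eval z‖) (Metric.sphere (0 : ℂ) R) :=
    (continuous_norm.comp f.continuous).continuousOn
  obtain ⟨z0, hz0, hmin⟩ := hcpt.exists_isMinOn hne hcont
  exact ⟨‖f.eval z0‖, by simpa using h z0 hz0, hmin⟩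

private lemma rho_bound (g : ℂ → ℂ) (R C : ℝ) (hR : 0 ≤ R)
    (hg : ∀ z ∈ Metric.sphere (0 : ℂ) R, ‖g z‖ ≤ C) :
    ‖-((2 * (Real.pi : ℂ) * Complex.I)⁻¹ * ∮ z in C(0, R), g z)‖ ≤ R * C := by
  have hI := circleIntegral.norm_integral_le_of_norm_le_const hR hg
  have habs : ‖(2 * (Real.pi : ℂ) * Complex.I)⁻¹‖ = (2 * Real.pi)⁻¹ := by
    simp [norm_inv, norm_mul, Complex.norm_I, Complex.norm_real,
      abs_of_pos Real.pi_pos]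
  rw [norm_neg, norm_mul, habs]
  calc (2 * Real.pi)⁻¹ * ‖∮ z in C(0, R), g z‖
      ≤ (2 * Real.pi)⁻¹ * (2 * Real.pi * R * C) := by
        apply mul_le_mul_of_nonneg_left _ (by positivity)
        simpa using hI
    _ = R * C := by
        field_simp

/-- for `f` with nonzero constant term and no root on the unit circle,
with all roots of modulus `> 1` actually of modulus `> 1 + δ`, and
`ρ_n = -(2πi)⁻¹ ∮_{|z|=1+δ} z^{n-1}/f(z) dz`: there is `λ > 1` with
`ρ_{-n} = o(λ^{-n})` as `n → ∞`; and if moreover every root has modulus `≠ 1`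
then there is `0 < δ' < 1` with `ρ_n = o(δ'^n)` as `n → ∞`. -/
theorem stmt6 (f : Polynomial ℂ) (hf : f ≠ 0) (hf0 : f.coeff 0 ≠ 0)
    (hcirc : ∀ z : ℂ, ‖z‖ = 1 → f.eval z ≠ 0)
    (δ : ℝ) (hδ : 0 < δ)
    (hout : ∀ z : ℂ, f.eval z = 0 → 1 < ‖z‖ → 1 + δ < ‖z‖)
    (ρ : ℤ → ℂ)
    (hρ : ∀ n : ℤ, ρ n =
      -((2 * (Real.pi : ℂ) * Complex.I)⁻¹ *
        ∮ z in C(0, 1 + δ), z ^ (n - 1) / f.eval z)) :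
    (∃ lam : ℝ, 1 < lam ∧
      (fun n : ℕ => ‖ρ (-(n : ℤ))‖) =o[atTop] fun n : ℕ => lam⁻¹ ^ n) ∧
    ((∀ z : ℂ, f.eval z = 0 → ‖z‖ ≠ 1) →
      ∃ δ' : ℝ, 0 < δ' ∧ δ' < 1 ∧
        (fun n : ℕ => ‖ρ (n : ℤ)‖) =o[atTop] fun n : ℕ => δ' ^ n) := by
  classical
  set R : ℝ := 1 + δ with hRdef
  have hR0 : (0 : ℝ) < R := by positivity
  have hR1 : (1 : ℝ) < R := by simp [hRdef]; linarith
  -- no roots on the circle of radius R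
  have hno : ∀ z ∈ Metric.sphere (0 : ℂ) R, f.eval z ≠ 0 := by
    intro z hz h0
    have hz' : ‖z‖ = R := by simpa [Complex.dist_eq] using hz
    have h1 : 1 < ‖z‖ := hz' ▸ hR1
    have := hout z h0 h1
    rw [hz'] at this
    exact lt_irrefl _ this
  obtain ⟨m, hm0, hm⟩ := sphere_min f R hR0.le hno
  constructor
  · -- part 1
    refine ⟨1 + δ / 2, by linarith, ?_⟩
    have key : ∀ n : ℕ, ‖ρ (-(n : ℤ))‖ ≤ m⁻¹ * (R⁻¹) ^ n := by
      intro n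
      rw [hρ]
      have hb : ∀ z ∈ Metric.sphere (0 : ℂ) R,
          ‖z ^ ((-(n : ℤ)) - 1) / f.eval z‖ ≤ R ^ ((-(n : ℤ)) - 1) / m := by
        intro z hz
        have hz' : ‖z‖ = R := by simpa [Complex.dist_eq] using hz
        have hfz := hm z hz
        rw [norm_div, norm_zpow, hz']
        apply div_le_div_of_nonneg_left ?_ hm0 hfz
        · positivity
      have := rho_bound _ R (R ^ ((-(n : ℤ)) - 1) / m) hR0.le hb
      refine this.trans (le_of_eq ?_)
      rw [zpow_sub₀ hR0.ne', zpow_neg, zpow_natCast, zpow_one]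
      field_simp
      ring
      rw [← mul_pow, mul_inv_cancel₀ hR0.ne', one_pow]
    have h1 : (fun n : ℕ => ‖ρ (-(n : ℤ))‖) =O[atTop]
        fun n : ℕ => (R⁻¹) ^ n := by
      apply IsBigO.of_bound m⁻¹
      filter_upwards with n
      rw [Real.norm_eq_abs, Real.norm_eq_abs, abs_of_nonneg (norm_nonneg _),
        abs_of_nonneg (by positivity)]
      exact key n
    refine h1.trans_isLittleO (isLittleO_pow_pow_of_lt_left (by positivity) ?_)
    apply inv_strictAnti₀ (by linarith)
    simp [hRdef]; linarith
  · -- part 2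
    intro _
    -- find a radius r' < 1 with no roots in r' ≤ |z| ≤ R
    obtain ⟨r', hr'0, hr'1, hr'⟩ : ∃ r' : ℝ, 0 < r' ∧ r' < 1 ∧
        ∀ z : ℂ, f.eval z = 0 → ‖z‖ < r' ∨ R < ‖z‖ := by
      set T : Finset ℝ :=
        insert (1/2) ((f.roots.toFinset.image (fun z : ℂ => ‖z‖)).filter (· < 1)) with hT
      have hne : T.Nonempty := ⟨1/2, Finset.mem_insert_self _ _⟩
      set M := T.max' hne with hM
      have hM1 : M < 1 := by
        rcases Finset.mem_insert.1 (T.max'_mem hne) with h | h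
        · rw [hM, h]; norm_num
        · exact (Finset.mem_filter.1 h).2
      have hM0 : (1/2 : ℝ) ≤ M := Finset.le_max' _ _ (Finset.mem_insert_self _ _)
      refine ⟨(M + 1) / 2, by linarith, by linarith, ?_⟩
      intro z hz
      rcases lt_trichotomy (‖z‖) 1 with h1 | h1 | h1
      · left
        have hmem : ‖z‖ ∈ T := by
          apply Finset.mem_insert_of_mem
          refine Finset.mem_filter.2 ⟨Finset.mem_image_of_mem _ ?_, h1⟩
          rw [Multiset.mem_toFinset, mem_roots hf]
          exact hz
        have := Finset.le_max' T _ hmem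
        linarith
      · exact absurd hz (hcirc z h1)
      · right; exact hout z hz h1
    have hr'R : r' ≤ R := by linarith
    -- no roots on sphere r'
    have hno' : ∀ z ∈ Metric.sphere (0 : ℂ) r', f.eval z ≠ 0 := by
      intro z hz h0
      have hz' : ‖z‖ = r' := by simpa [Complex.dist_eq] using hz
      rcases hr' z h0 with h | h <;> rw [hz'] at h <;> linarith
    obtain ⟨m', hm'0, hm'⟩ := sphere_min f r' hr'0.le hno'
    refine ⟨(r' + 1) / 2, by linarith, by linarith, ?_⟩
    have key : ∀ n : ℕ, 1 ≤ n → ‖ρ (n : ℤ)‖ ≤ m'⁻¹ * r' ^ n := by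
      intro n hn
      rw [hρ]
      set k : ℕ := n - 1 with hk
      have hnk : (n : ℤ) - 1 = (k : ℤ) := by omega
      have hfun : (fun z : ℂ => z ^ ((n : ℤ) - 1) / f.eval z)
          = fun z : ℂ => z ^ k / f.eval z := by
        funext z; rw [hnk, zpow_natCast]
      rw [hfun]
      -- contour shrinking
      have hannulus : (∮ z in C(0, R), z ^ k / f.eval z)
          = ∮ z in C(0, r'), z ^ k / f.eval z := by
        apply Complex.circleIntegral_eq_of_differentiable_on_annulus_off_countable hr'0 hr'R
          Set.countable_empty
        · apply ContinuousOn.div (continuous_pow k).continuousOn f.continuous.continuousOn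
          intro z hz h0
          obtain ⟨hz1, hz2⟩ := hz
          rcases hr' z h0 with h | h
          · exact hz2 (by simpa [Metric.mem_ball, Complex.dist_eq] using h)
          · have : ‖z‖ ≤ R := by
              simpa [Metric.mem_closedBall, Complex.dist_eq] using hz1
            linarith
        · rintro z ⟨⟨hz1, hz2⟩, -⟩
          apply DifferentiableAt.div (differentiableAt_pow k) f.differentiableAt
          intro h0
          rcases hr' z h0 with h | h
          · exact hz2 (by simpa [Metric.mem_closedBall, Complex.dist_eq] using h.le)
          · have : ‖z‖ < R := by
              simpa [Metric.mem_ball, Complex.dist_eq] using hz1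
            linarith
      rw [hannulus]
      have hb : ∀ z ∈ Metric.sphere (0 : ℂ) r',
          ‖z ^ k / f.eval z‖ ≤ r' ^ k / m' := by
        intro z hz
        have hz' : ‖z‖ = r' := by simpa [Complex.dist_eq] using hz
        have hfz := hm' z hz
        rw [norm_div, norm_pow, hz']
        apply div_le_div_of_nonneg_left ?_ hm'0 hfz
        · positivity
      have := rho_bound _ r' (r' ^ k / m') hr'0.le hb
      refine this.trans (le_of_eq ?_)
      have hkn : k + 1 = n := by omega
      rw [← hkn, pow_succ]
      field_simp
      try ring
    have h1 : (fun n : ℕ => ‖ρ (n : ℤ)‖) =O[atTop]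
        fun n : ℕ => r' ^ n := by
      apply IsBigO.of_bound m'⁻¹
      filter_upwards [eventually_ge_atTop 1] with n hn
      rw [Real.norm_eq_abs, Real.norm_eq_abs, abs_of_nonneg (norm_nonneg _),
        abs_of_nonneg (by positivity)]
      exact key n hn
    refine h1.trans_isLittleO (isLittleO_pow_pow_of_lt_left hr'0.le (by linarith))
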